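/- Let two tagged pentatopes of the same type 0 arise from the subdivision tagging of two prisms over distinct tetrahedra T, T' sharing a common triangular face, within the same time slab. If the two pentatopes share a hyperface, then their vertex orderings (determined by the fixed color order D,C,B,A of spatial labels followed by primed copies) agree in all but one position, and hence they are reflected neighbors. -/

import Mathlib

/-- A tagged pentatope: an ordered 5-tuple of vertices together with a type γ ∈ {0,1,2,3}. -/
structure TP (V : Type*) where
  v : Fin 5 → V
  γ : Fin 4

/-- The vertex permutation used in Stevenson's reflection, depending on the type. -/
def refPerm (γ : Fin 4) : Fin 5 → Fin 5 :=
  if γ = 0 then ![4, 3, 2, 1, 0]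
  else if γ = 1 then ![4, 1, 3, 2, 0]
  else ![4, 1, 2, 3, 0]

/-- The reflection of a tagged pentatope. -/
def TP.reflect {V : Type*} (t : TP V) : TP V := ⟨t.v ∘ refPerm t.γ, t.γ⟩

/-- Two vertex orderings agree in all but (at most) one position. -/
def agreeButOne {V : Type*} (u w : Fin 5 → V) : Prop :=
  ∃ i : Fin 5, ∀ j : Fin 5, j ≠ i → u j = w j

/-- Reflected neighbors: same type, share a hyperface (four common vertices), and the
vertex order of t' matches that of t or of its reflection t_R in all but one
position. -/
def ReflNbr {V : Type*} (t t' : TP V) : Prop :=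
  t.γ = t'.γ ∧ (Set.range t.v ∩ Set.range t'.v).encard = 4 ∧
    (agreeButOne t.v t'.v ∨ agreeButOne t.reflect.v t'.v)

/-- ψ_t : ℝ³ → ℝ⁴, appending the coordinate t. -/
def lift (t : ℝ) (x : Fin 3 → ℝ) : Fin 4 → ℝ := Fin.snoc x t

/-- The subdivision tagging of the prism over a tetrahedron `u : Fin 4 → ℝ³`
(vertices indexed by their colors A = 0, B = 1, C = 2, D = 3), extruded between
times r and s: t₁ = (x_D,x_C,x_B,x_A,x_D')₀, t₂ = (x_C,x_B,x_A,x_D',x_C')₀,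
t₃ = (x_B,x_A,x_D',x_C',x_B')₀, t₄ = (x_A,x_D',x_C',x_B',x_A')₀. -/
def tagOf (r s : ℝ) (u : Fin 4 → (Fin 3 → ℝ)) : Fin 4 → TP (Fin 4 → ℝ)
  | 0 => ⟨![lift r (u 3), lift r (u 2), lift r (u 1), lift r (u 0), lift s (u 3)], 0⟩
  | 1 => ⟨![lift r (u 2), lift r (u 1), lift r (u 0), lift s (u 3), lift s (u 2)], 0⟩
  | 2 => ⟨![lift r (u 1), lift r (u 0), lift s (u 3), lift s (u 2), lift s (u 1)], 0⟩
  | 3 => ⟨![lift r (u 0), lift s (u 3), lift s (u 2), lift s (u 1), lift s (u 0)], 0⟩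

/-- Index bookkeeping: vertices of `tagOf r s v i` as (time-level, point-index) pairs. -/
def Fmap : Fin 4 → Fin 5 → Bool × Fin 5
  | 0 => ![(false,3),(false,2),(false,1),(false,0),(true,3)]
  | 1 => ![(false,2),(false,1),(false,0),(true,3),(true,2)]
  | 2 => ![(false,1),(false,0),(true,3),(true,2),(true,1)]
  | 3 => ![(false,0),(true,3),(true,2),(true,1),(true,0)]

/-- Index bookkeeping for the second tetrahedron: color `L` is remapped to index 4. -/
def Gmap (L j : Fin 4) : Fin 5 → Bool × Fin 5 :=
  fun k => ((Fmap j k).1, if (Fmap j k).2 = L.castSucc then 4 else (Fmap j k).2)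

theorem core : ∀ L i j : Fin 4,
    ((Finset.image (Fmap i) Finset.univ) ∩ (Finset.image (Gmap L j) Finset.univ)).card = 4 →
    ∃ p : Fin 5, ∀ q : Fin 5, q ≠ p → Fmap i q = Gmap L j q := by decide

lemma lift_inj {t t' : ℝ} {x x' : Fin 3 → ℝ} (h : lift t x = lift t' x') :
    t = t' ∧ x = x' := by
  constructor
  · have := congrFun h (Fin.last 3)
    simpa only [lift, Fin.snoc_last] using this
  · funext i
    have := congrFun h i.castSucc
    simpa [lift] using this

/-- For two tetrahedra of a 4-colored conforming mesh sharing a common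
triangular face (so they agree except at the vertex of one color L), extruded in the
same time slab, any two pentatopes of their subdivision taggings that share a hyperface
have vertex orderings agreeing in all but one position, and hence are reflected
neighbors. -/
theorem same_slab_shared_hyperface_reflected_neighbors
    (v w : Fin 4 → (Fin 3 → ℝ))
    (hv : AffineIndependent ℝ v) (hw : AffineIndependent ℝ w)
    (hface : ∃ L : Fin 4, (∀ k : Fin 4, k ≠ L → v k = w k) ∧ v L ≠ w L)
    (r s : ℝ) (hrs : r < s) :
    ∀ i j : Fin 4,
      (Set.range (tagOf r s v i).v ∩ Set.range (tagOf r s w j).v).encard = 4 →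
      agreeButOne (tagOf r s v i).v (tagOf r s w j).v ∧
        ReflNbr (tagOf r s v i) (tagOf r s w j) := by
  obtain ⟨L, hvw, hLne⟩ := hface
  have hvinj : Function.Injective v := hv.injective
  have hwinj : Function.Injective w := hw.injective
  -- the 5 distinct spatial points
  set P : Fin 5 → (Fin 3 → ℝ) := ![v 0, v 1, v 2, v 3, w L] with hP
  have hwL : ∀ k : Fin 4, w L ≠ v k := by
    intro k h
    by_cases hk : k = L
    · exact hLne (hk ▸ h.symm)
    · exact (hwinj.ne (Ne.symm hk)) ((hvw k hk) ▸ h)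
  have hPc : ∀ k : Fin 4, P k.castSucc = v k := by
    intro k; fin_cases k <;> rfl
  have hPinj : Function.Injective P := by
    intro a b hab
    by_contra hne
    fin_cases a <;> fin_cases b <;> simp_all [P] <;>
      first
        | exact hvinj.ne (by decide) hab
        | exact (hwL _) hab.symm
  -- the embedding into ℝ⁴
  set e : Bool × Fin 5 → (Fin 4 → ℝ) :=
    fun p => lift (if p.1 then s else r) (P p.2) with he
  have heinj : Function.Injective e := by
    intro a b hab
    obtain ⟨ht, hx⟩ := lift_inj hab
    have h1 : a.1 = b.1 := by
      cases ha : a.1 <;> cases hb : b.1 <;> simp [ha, hb] at ht <;>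
        first | rfl | exact absurd ht (by intro hh; exact hrs.ne hh.symm) |
          exact absurd ht hrs.ne
    have h2 : a.2 = b.2 := hPinj hx
    exact Prod.ext h1 h2
  have hkey : ∀ (b : Bool) (k : Fin 4),
      e (b, if k.castSucc = L.castSucc then 4 else k.castSucc)
        = lift (if b then s else r) (w k) := by
    intro b k
    by_cases hk : k = L
    · subst hk; simp [e, P]
    · have : k.castSucc ≠ L.castSucc := by
        simpa [Fin.castSucc_inj] using hk
      simp [e, this, hPc k, hvw k hk]
  have hFv : ∀ i : Fin 4, (tagOf r s v i).v = e ∘ Fmap i := by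
    intro i
    funext k
    fin_cases i <;> fin_cases k <;> simp [tagOf, Fmap, e, P, Matrix.cons_val_fin_one]
  have hGw : ∀ j : Fin 4, (tagOf r s w j).v = e ∘ Gmap L j := by
    intro j
    funext k
    fin_cases j <;> fin_cases k <;>
      first
        | exact (hkey false 0).symm
        | exact (hkey false 1).symm
        | exact (hkey false 2).symm
        | exact (hkey false 3).symm
        | exact (hkey true 0).symm
        | exact (hkey true 1).symm
        | exact (hkey true 2).symm
        | exact (hkey true 3).symm
  intro i j hcard
  -- translate encard to a Finset card
  have hset : Set.range (tagOf r s v i).v ∩ Set.range (tagOf r s w j).v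
      = e '' (Set.range (Fmap i) ∩ Set.range (Gmap L j)) := by
    rw [hFv i, hGw j, Set.range_comp, Set.range_comp, Set.image_inter heinj]
  have hre : ∀ (f : Fin 5 → Bool × Fin 5),
      Set.range f = ↑(Finset.image f Finset.univ) := by
    intro f
    rw [Finset.coe_image, Finset.coe_univ, Set.image_univ]
  have hcard' : ((Finset.image (Fmap i) Finset.univ) ∩
      (Finset.image (Gmap L j) Finset.univ)).card = 4 := by
    have := hcard
    rw [hset, Set.InjOn.encard_image (heinj.injOn), hre, hre,
      ← Finset.coe_inter, Set.encard_coe_eq_coe_finsetCard] at this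
    exact_mod_cast this
  obtain ⟨p, hp⟩ := core L i j hcard'
  have habo : agreeButOne (tagOf r s v i).v (tagOf r s w j).v := by
    refine ⟨p, fun q hq => ?_⟩
    rw [hFv i, hGw j]
    exact congrArg e (hp q hq)
  refine ⟨habo, ?_, hcard, Or.inl habo⟩
  fin_cases i <;> fin_cases j <;> rfl
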